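/- Let f₁, f₂ : ℝ → ℝ be continuous with asymptotic slopes λ₁ < λ₂. Define the Pitman transform P and the co-Pitman transform P̄ by P̄ g₁(x) = g₁(x) + sup_{z ≥ x}[g₂(z) − g₁(z)], P̄ g₂(x) = g₂(x) − sup_{z ≥ x}[g₂(z) − g₁(z)] (applied when slope of g₁ exceeds slope of g₂). Then P̄(P(f₁, f₂)) = (f₁, f₂); i.e., the co-Pitman transform inverts the Pitman transform. -/

import Mathlib

/-- `f` has asymptotic slope `a`: `f x / x → a` as `x → ±∞`. -/
def HasSlope (f : ℝ → ℝ) (a : ℝ) : Prop :=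
  Filter.Tendsto (fun x => f x / x) Filter.atTop (nhds a) ∧
  Filter.Tendsto (fun x => f x / x) Filter.atBot (nhds a)

/-- First component of the Pitman transform. -/
noncomputable def pitman1 (f₁ f₂ : ℝ → ℝ) (x : ℝ) : ℝ :=
  f₁ x + sSup ((fun z => f₂ z - f₁ z) '' Set.Iic x)

/-- Second component of the Pitman transform. -/
noncomputable def pitman2 (f₁ f₂ : ℝ → ℝ) (x : ℝ) : ℝ :=
  f₂ x - sSup ((fun z => f₂ z - f₁ z) '' Set.Iic x)

/-- First component of the co-Pitman transform:
`P̄ g₁ (x) = g₁(x) + sup_{z ≥ x} [g₂(z) − g₁(z)]`. -/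
noncomputable def coPitman1 (g₁ g₂ : ℝ → ℝ) (x : ℝ) : ℝ :=
  g₁ x + sSup ((fun z => g₂ z - g₁ z) '' Set.Ici x)

/-- Second component of the co-Pitman transform:
`P̄ g₂ (x) = g₂(x) − sup_{z ≥ x} [g₂(z) − g₁(z)]`. -/
noncomputable def coPitman2 (g₁ g₂ : ℝ → ℝ) (x : ℝ) : ℝ :=
  g₂ x - sSup ((fun z => g₂ z - g₁ z) '' Set.Ici x)

open Filter Set

-- structure: d continuous, d → atTop at atTop, images over Iic bounded above.
theorem exists_last_max (d : ℝ → ℝ) (hd_cont : Continuous d)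
    (hd_top : Filter.Tendsto d Filter.atTop Filter.atTop)
    (hbdd : ∀ x, BddAbove (d '' Set.Iic x)) (x : ℝ) :
    ∃ z, x ≤ z ∧ d z = sSup (d '' Set.Iic x) ∧ sSup (d '' Set.Iic z) = sSup (d '' Set.Iic x) := by
  set S : ℝ → ℝ := fun y => sSup (d '' Set.Iic y) with hS
  have hne : ∀ y : ℝ, (d '' Set.Iic y).Nonempty := fun y => ⟨d y, y, Set.mem_Iic.2 le_rfl, rfl⟩
  have hle : ∀ t y : ℝ, t ≤ y → d t ≤ S y := fun t y h => le_csSup (hbdd y) ⟨t, h, rfl⟩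
  obtain ⟨T₀, hT₀⟩ := Filter.eventually_atTop.1 (hd_top.eventually (Filter.eventually_ge_atTop (S x)))
  set K : Set ℝ := Set.Ici x ∩ d ⁻¹' Set.Ici (S x) with hK
  have hKmem : ∀ t, t ∈ K ↔ x ≤ t ∧ S x ≤ d t := by intro t; simp [hK]
  have hKne : K.Nonempty := ⟨max x T₀, (hKmem _).2 ⟨le_max_left _ _, hT₀ _ (le_max_right _ _)⟩⟩
  have hKbdd : BddBelow K := ⟨x, fun t ht => ((hKmem t).1 ht).1⟩
  have hKclosed : IsClosed K := isClosed_Ici.inter (isClosed_Ici.preimage hd_cont)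
  set z := sInf K with hz
  have hzK : z ∈ K := hKclosed.csInf_mem hKne hKbdd
  have hxz : x ≤ z := ((hKmem z).1 hzK).1
  have hdz_ge : S x ≤ d z := ((hKmem z).1 hzK).2
  have hmid : ∀ t, x < t → t < z → d t < S x := by
    intro t hxt htz
    by_contra h
    push_neg at h
    exact absurd (csInf_le hKbdd ((hKmem t).2 ⟨hxt.le, h⟩)) (not_le.2 htz)
  have hdz_le : d z ≤ S x := by
    rcases eq_or_lt_of_le hxz with h | h
    · rw [← h]; exact hle x x le_rfl
    · have htd : Filter.Tendsto d (nhdsWithin z (Set.Iio z)) (nhds (d z)) :=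
        (hd_cont.tendsto z).mono_left nhdsWithin_le_nhds
      refine le_of_tendsto htd ?_
      filter_upwards [Ioo_mem_nhdsLT h] with t ht
      exact (hmid t ht.1 ht.2).le
  have hdz : d z = S x := le_antisymm hdz_le hdz_ge
  have hSz : S z = S x := by
    apply le_antisymm
    · apply csSup_le (hne z)
      rintro _ ⟨t, htz, rfl⟩
      rcases le_or_gt t x with h | h
      · exact hle t x h
      · rcases eq_or_lt_of_le (Set.mem_Iic.1 htz) with h2 | h2
        · rw [h2, hdz]
        · exact (hmid t h h2).le
    · exact csSup_le_csSup (hbdd z) (hne x) (Set.image_mono (Set.Iic_subset_Iic.2 hxz))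
  exact ⟨z, hxz, hdz, hSz⟩

theorem key_sup (f₁ f₂ : ℝ → ℝ) (lam₁ lam₂ : ℝ)
    (hc₁ : Continuous f₁) (hc₂ : Continuous f₂)
    (hs₁ : HasSlope f₁ lam₁) (hs₂ : HasSlope f₂ lam₂) (hlt : lam₁ < lam₂) (x : ℝ) :
    sSup ((fun t => pitman2 f₁ f₂ t - pitman1 f₁ f₂ t) '' Set.Ici x)
      = - sSup ((fun z => f₂ z - f₁ z) '' Set.Iic x) := by
  set d : ℝ → ℝ := fun z => f₂ z - f₁ z with hd
  have hd_cont : Continuous d := hc₂.sub hc₁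
  have hc0 : (0:ℝ) < lam₂ - lam₁ := sub_pos.2 hlt
  have hqtop : Filter.Tendsto (fun y => d y / y) Filter.atTop (nhds (lam₂ - lam₁)) := by
    simpa [hd, sub_div] using hs₂.1.sub hs₁.1
  have hqbot : Filter.Tendsto (fun y => d y / y) Filter.atBot (nhds (lam₂ - lam₁)) := by
    simpa [hd, sub_div] using hs₂.2.sub hs₁.2
  have hd_top : Filter.Tendsto d Filter.atTop Filter.atTop := by
    have h := Filter.Tendsto.pos_mul_atTop hc0 hqtop tendsto_id
    refine Filter.Tendsto.congr' ?_ h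
    filter_upwards [Filter.eventually_gt_atTop (0:ℝ)] with y hy
    simp [div_mul_cancel₀ _ hy.ne']
  have hd_bot : Filter.Tendsto d Filter.atBot Filter.atBot := by
    have h := Filter.Tendsto.pos_mul_atBot hc0 hqbot tendsto_id
    refine Filter.Tendsto.congr' ?_ h
    filter_upwards [Filter.eventually_lt_atBot (0:ℝ)] with y hy
    simp [div_mul_cancel₀ _ hy.ne]
  have hbdd : ∀ y : ℝ, BddAbove (d '' Set.Iic y) := by
    intro y
    obtain ⟨N, hN⟩ := Filter.eventually_atBot.1 (hd_bot.eventually (Filter.eventually_le_atBot 0))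
    have hsub : d '' Set.Iic y ⊆ Set.Iic 0 ∪ d '' Set.Icc (min N y) y := by
      rintro _ ⟨t, ht, rfl⟩
      rcases le_or_gt t (min N y) with h | h
      · exact Or.inl (hN t (h.trans (min_le_left _ _)))
      · exact Or.inr ⟨t, ⟨h.le, ht⟩, rfl⟩
    exact BddAbove.mono hsub (bddAbove_Iic.union (isCompact_Icc.image hd_cont).bddAbove)
  have hne : ∀ y : ℝ, (d '' Set.Iic y).Nonempty := fun y => ⟨d y, y, Set.mem_Iic.2 le_rfl, rfl⟩
  set S : ℝ → ℝ := fun y => sSup (d '' Set.Iic y) with hS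
  have hSmono : ∀ {a b : ℝ}, a ≤ b → S a ≤ S b := fun {a b} hab =>
    csSup_le_csSup (hbdd b) (hne a) (Set.image_mono (Set.Iic_subset_Iic.2 hab))
  have hrw : (fun t => pitman2 f₁ f₂ t - pitman1 f₁ f₂ t) = fun t => d t - 2 * S t := by
    funext t
    simp only [pitman1, pitman2, hd, hS]
    ring
  rw [hrw]
  obtain ⟨z, hxz, hdz, hSz⟩ := exists_last_max d hd_cont hd_top hbdd x
  apply IsGreatest.csSup_eq
  constructor
  · refine ⟨z, hxz, ?_⟩
    have h3 : S z = S x := hSz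
    have h4 : d z = S x := hdz
    simp only
    linarith
  · rintro _ ⟨t, ht, rfl⟩
    have h1 : d t ≤ S t := le_csSup (hbdd t) ⟨t, Set.mem_Iic.2 le_rfl, rfl⟩
    have h2 : S x ≤ S t := hSmono ht
    simp only
    linarith

/-- The co-Pitman transform inverts the Pitman transform: `P̄ (P (f₁, f₂)) = (f₁, f₂)`
for continuous `f₁, f₂` with asymptotic slopes `λ₁ < λ₂`. -/
theorem coPitman_pitman_inverse (f₁ f₂ : ℝ → ℝ) (lam₁ lam₂ : ℝ)
    (hc₁ : Continuous f₁) (hc₂ : Continuous f₂)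
    (hs₁ : HasSlope f₁ lam₁) (hs₂ : HasSlope f₂ lam₂) (hlt : lam₁ < lam₂) :
    coPitman1 (pitman1 f₁ f₂) (pitman2 f₁ f₂) = f₁ ∧
    coPitman2 (pitman1 f₁ f₂) (pitman2 f₁ f₂) = f₂ := by
  constructor
  · funext x
    rw [coPitman1, key_sup f₁ f₂ lam₁ lam₂ hc₁ hc₂ hs₁ hs₂ hlt x, pitman1]
    ring
  · funext x
    rw [coPitman2, key_sup f₁ f₂ lam₁ lam₂ hc₁ hc₂ hs₁ hs₂ hlt x, pitman2]
    ring
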